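/- Let n > 2 be an integer, p = (n+2)/(n−2), λ > 0 and y ∈ ℝⁿ. Define φ(x) = (λ√(n(n−2))/(λ² + |x−y|²))^{(n−2)/2} and ζ(x) = (λ² + |x−y|²)^{−n/2−1}. Then ζ ∈ H¹(ℝⁿ) and ∫_{ℝⁿ} |∇ζ(x)|² dx − ∫_{ℝⁿ} p·φ(x)^{p−1}·ζ(x)² dx < 0. -/

import Mathlib

set_option maxHeartbeats 1000000

open MeasureTheory Real Filter Set Topology

section helpers
variable {lam : ℝ} (hlam : 0 < lam)

include hlam in
lemma base_pos (r : ℝ) : 0 < lam ^ 2 + r ^ 2 := by positivity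

include hlam in
lemma cont_aux (m : ℕ) (k : ℝ) :
    Continuous (fun r : ℝ => r ^ m * (lam ^ 2 + r ^ 2) ^ (-k)) := by
  refine (continuous_pow m).mul ?_
  refine Continuous.rpow_const (by continuity) (fun r => Or.inl (base_pos hlam r).ne')

include hlam in
lemma int1d (m : ℕ) (k : ℝ) (h : (m : ℝ) + 1 < 2 * k) :
    IntegrableOn (fun r : ℝ => r ^ m * (lam ^ 2 + r ^ 2) ^ (-k)) (Ioi 0) := by
  have hk : 0 < k := by nlinarith [Nat.cast_nonneg (α := ℝ) m]
  have h1 : IntegrableOn (fun r : ℝ => r ^ m * (lam ^ 2 + r ^ 2) ^ (-k)) (Ioc 0 1) :=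
    (cont_aux hlam m k).integrableOn_Ioc
  have h2 : IntegrableOn (fun r : ℝ => r ^ m * (lam ^ 2 + r ^ 2) ^ (-k)) (Ioi 1) := by
    refine (integrableOn_Ioi_rpow_of_lt (a := (m : ℝ) - 2 * k) (by linarith) one_pos).mono'
      ((cont_aux hlam m k).aestronglyMeasurable.restrict) ?_
    filter_upwards [ae_restrict_mem measurableSet_Ioi] with r hr
    have hr1 : (1 : ℝ) ≤ r := le_of_lt hr
    have hr0 : 0 < r := lt_of_lt_of_le one_pos hr1
    have hb := base_pos hlam r
    rw [Real.norm_eq_abs, abs_of_nonneg (by positivity)]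
    have e1 : (lam ^ 2 + r ^ 2) ^ (-k) ≤ (r ^ 2) ^ (-k) := by
      apply rpow_le_rpow_of_nonpos (by positivity) (by nlinarith) (by linarith)
    calc r ^ m * (lam ^ 2 + r ^ 2) ^ (-k) ≤ r ^ m * (r ^ 2) ^ (-k) := by
          apply mul_le_mul_of_nonneg_left e1 (by positivity)
      _ = r ^ ((m : ℝ) - 2 * k) := by
          rw [← Real.rpow_natCast r m, ← Real.rpow_natCast r 2, ← Real.rpow_mul hr0.le,
            ← Real.rpow_add hr0]
          ring_nf
  have := h1.union h2
  rwa [Ioc_union_Ioi_eq_Ioi (le_of_lt one_pos)] at this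

include hlam in
lemma int1d_pos (m : ℕ) (k : ℝ) (h : (m : ℝ) + 1 < 2 * k) :
    0 < ∫ r in Ioi (0:ℝ), r ^ m * (lam ^ 2 + r ^ 2) ^ (-k) := by
  rw [setIntegral_pos_iff_support_of_nonneg_ae ?_ (int1d hlam m k h)]
  · refine lt_of_lt_of_le ?_ (measure_mono (show Ioi (0:ℝ) ⊆ _ from fun r hr => ?_))
    · simp
    · refine ⟨?_, hr⟩
      have hr0 : (0:ℝ) < r := hr
      exact (mul_pos (pow_pos hr0 m) (rpow_pos_of_pos (base_pos hlam r) _)).ne'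
  · filter_upwards [ae_restrict_mem measurableSet_Ioi] with r hr
    have hr0 : (0:ℝ) < r := hr
    exact (mul_pos (pow_pos hr0 m) (rpow_pos_of_pos (base_pos hlam r) _)).le

include hlam in
lemma intE {n : ℕ} (m : ℕ) (k : ℝ) (h : (n : ℝ) + m < 2 * k) :
    Integrable (fun x : EuclideanSpace ℝ (Fin n) =>
      ‖x‖ ^ m * (lam ^ 2 + ‖x‖ ^ 2) ^ (-k)) volume := by
  have hk : 0 ≤ k := by nlinarith [Nat.cast_nonneg (α := ℝ) m, Nat.cast_nonneg (α := ℝ) n]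
  set c : ℝ := min 1 (lam ^ 2) with hc
  have hc0 : 0 < c := lt_min one_pos (by positivity)
  set C : ℝ := (c / 2) ^ (-k) with hC
  have hint : Integrable (fun x : EuclideanSpace ℝ (Fin n) =>
      C * (1 + ‖x‖) ^ (-(2 * k - m))) volume := by
    refine (integrable_one_add_norm ?_).const_mul C
    rw [finrank_euclideanSpace_fin]; linarith
  refine hint.mono' ?_ ?_
  · refine Continuous.aestronglyMeasurable ?_
    exact (continuous_norm.pow m).mul (Continuous.rpow_const (by continuity)
      (fun x => Or.inl (base_pos hlam ‖x‖).ne'))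
  · filter_upwards with x
    set r : ℝ := ‖x‖ with hr
    have hr0 : 0 ≤ r := norm_nonneg x
    have hb : 0 < lam ^ 2 + r ^ 2 := by positivity
    rw [Real.norm_eq_abs, abs_of_nonneg (by positivity)]
    have key : (lam ^ 2 + r ^ 2) ^ (-k) ≤ C * ((1 + r) ^ 2) ^ (-k) := by
      have h1 : c / 2 * (1 + r) ^ 2 ≤ lam ^ 2 + r ^ 2 := by
        have h2 : c ≤ 1 := min_le_left _ _
        have h3 : c ≤ lam ^ 2 := min_le_right _ _
        nlinarith [sq_nonneg (1 - r)]
      calc (lam ^ 2 + r ^ 2) ^ (-k) ≤ (c / 2 * (1 + r) ^ 2) ^ (-k) :=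
            rpow_le_rpow_of_nonpos (by positivity) h1 (by linarith)
        _ = C * ((1 + r) ^ 2) ^ (-k) := by
            rw [Real.mul_rpow (by positivity) (by positivity)]
    calc r ^ m * (lam ^ 2 + r ^ 2) ^ (-k)
        ≤ (1 + r) ^ m * (C * ((1 + r) ^ 2) ^ (-k)) := by
          apply mul_le_mul (pow_le_pow_left₀ hr0 (by linarith) m) key
            (le_of_lt (rpow_pos_of_pos hb _)) (by positivity)
      _ = C * (1 + r) ^ (-(2 * k - m)) := by
          rw [← Real.rpow_natCast (1 + r) m, ← Real.rpow_natCast (1 + r) 2,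
            ← Real.rpow_mul (by positivity : (0:ℝ) ≤ 1 + r),
            mul_comm ((1+r) ^ ((m:ℝ))), mul_assoc,
            ← Real.rpow_add (by positivity : (0:ℝ) < 1 + r)]
          congr 1
          push_cast
          ring

include hlam in
lemma key_identity (n : ℕ) (hn : 2 < n)
    (hJ3 : IntegrableOn (fun r : ℝ => r ^ (n-1) * (lam ^ 2 + r ^ 2) ^ (-((n:ℝ)+3))) (Ioi 0))
    (hA : IntegrableOn (fun r : ℝ => r ^ (n+1) * (lam ^ 2 + r ^ 2) ^ (-((n:ℝ)+4))) (Ioi 0)) :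
    (n:ℝ) * ∫ r in Ioi (0:ℝ), r ^ (n-1) * (lam ^ 2 + r ^ 2) ^ (-((n:ℝ)+3))
      = 2 * ((n:ℝ)+3) * ∫ r in Ioi (0:ℝ), r ^ (n+1) * (lam ^ 2 + r ^ 2) ^ (-((n:ℝ)+4)) := by
  set F : ℝ → ℝ := fun r => r ^ n * (lam ^ 2 + r ^ 2) ^ (-((n:ℝ)+3)) with hF
  set f' : ℝ → ℝ := fun r => (n:ℝ) * (r ^ (n-1) * (lam ^ 2 + r ^ 2) ^ (-((n:ℝ)+3)))
      - 2 * ((n:ℝ)+3) * (r ^ (n+1) * (lam ^ 2 + r ^ 2) ^ (-((n:ℝ)+4))) with hf'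
  have hderiv : ∀ r ∈ Ici (0:ℝ), HasDerivAt F (f' r) r := by
    intro r _
    have hb := base_pos hlam r
    have h1 : HasDerivAt (fun r : ℝ => lam ^ 2 + r ^ 2) (2 * r ^ 1) r :=
      (hasDerivAt_pow 2 r).const_add (lam ^ 2)
    have h2 := h1.rpow_const (p := -((n:ℝ)+3)) (Or.inl hb.ne')
    have h3 := (hasDerivAt_pow n r).mul h2
    refine h3.congr_deriv ?_
    rw [hf']
    have e1 : -((n:ℝ)+3) - 1 = -((n:ℝ)+4) := by ring
    have e2 : r ^ (n+1) = r ^ n * r := pow_succ r n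
    simp only [e1, e2, pow_one]
    ring
  have htend : Tendsto F atTop (𝓝 0) := by
    apply squeeze_zero' (g := fun r : ℝ => r ^ (-((n:ℝ)+6)))
    · filter_upwards [eventually_ge_atTop (0:ℝ)] with r hr
      have hb := base_pos hlam r
      positivity
    · filter_upwards [eventually_ge_atTop (1:ℝ)] with r hr
      have hr0 : (0:ℝ) < r := lt_of_lt_of_le one_pos hr
      have hb := base_pos hlam r
      calc r ^ n * (lam ^ 2 + r ^ 2) ^ (-((n:ℝ)+3))
          ≤ r ^ n * (r ^ 2) ^ (-((n:ℝ)+3)) := by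
            have hexp : -((n:ℝ)+3) ≤ 0 := neg_nonpos.mpr (by positivity)
            apply mul_le_mul_of_nonneg_left
              (rpow_le_rpow_of_nonpos (by positivity) (by nlinarith) hexp) (by positivity)
        _ = r ^ (-((n:ℝ)+6)) := by
            rw [← Real.rpow_natCast r n, ← Real.rpow_natCast r 2,
              ← Real.rpow_mul hr0.le, ← Real.rpow_add hr0]
            congr 1; ring
    · exact tendsto_rpow_neg_atTop (by positivity)
  have hint : IntegrableOn f' (Ioi (0:ℝ)) := (hJ3.const_mul _).sub (hA.const_mul _)
  have hF0 : F 0 = 0 := by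
    rw [hF]; simp [zero_pow (by omega : n ≠ 0)]
  have := integral_Ioi_of_hasDerivAt_of_tendsto' hderiv hint htend
  rw [hF0, sub_zero] at this
  rw [hf'] at this
  rw [integral_sub (hJ3.const_mul _) (hA.const_mul _), MeasureTheory.integral_const_mul,
    MeasureTheory.integral_const_mul] at this
  linarith

end helpers

lemma zeta_hasGradient {n : ℕ} {lam : ℝ} (hlam : 0 < lam)
    (y x : EuclideanSpace ℝ (Fin n)) :
    HasGradientAt (fun x : EuclideanSpace ℝ (Fin n) =>
        (lam ^ 2 + ‖x - y‖ ^ 2) ^ (-(n:ℝ)/2 - 1))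
      (((-(n:ℝ) - 2) * (lam ^ 2 + ‖x - y‖ ^ 2) ^ (-(n:ℝ)/2 - 2)) • (x - y)) x := by
  set u : ℝ := ‖x - y‖ ^ 2 with hu
  have hb : 0 < lam ^ 2 + u := by positivity
  set c : ℝ := -(n:ℝ)/2 - 1 with hc
  have hU : HasFDerivAt (fun x : EuclideanSpace ℝ (Fin n) => ‖x - y‖ ^ 2)
      (2 • (innerSL ℝ (x - y)).comp (ContinuousLinearMap.id ℝ (EuclideanSpace ℝ (Fin n)))) x :=
    ((hasFDerivAt_id x).sub_const y).norm_sq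
  have hh : HasDerivAt (fun t : ℝ => (lam ^ 2 + t) ^ c)
      (1 * c * (lam ^ 2 + u) ^ (c - 1)) u :=
    ((hasDerivAt_id u).const_add (lam ^ 2)).rpow_const (Or.inl hb.ne')
  have hcomp := hh.comp_hasFDerivAt x hU
  rw [hasGradientAt_iff_hasFDerivAt]
  have heq : (InnerProductSpace.toDual ℝ (EuclideanSpace ℝ (Fin n)))
      (((-(n:ℝ) - 2) * (lam ^ 2 + ‖x - y‖ ^ 2) ^ (-(n:ℝ)/2 - 2)) • (x - y))
      = (1 * c * (lam ^ 2 + u) ^ (c - 1)) •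
        (2 • (innerSL ℝ (x - y)).comp (ContinuousLinearMap.id ℝ (EuclideanSpace ℝ (Fin n)))) := by
    ext z
    simp only [InnerProductSpace.toDual_apply_apply, ContinuousLinearMap.smul_apply,
      ContinuousLinearMap.coe_comp', Function.comp_apply, ContinuousLinearMap.coe_id', id_eq,
      innerSL_apply_apply, real_inner_smul_left, smul_eq_mul]
    have : c - 1 = -(n:ℝ)/2 - 2 := by rw [hc]; ring
    rw [this]
    ring
  rw [heq]
  exact hcomp


/-- The critical-case computation in Lemma 5.3: for the Aubin–Talenti steady states
`φ` of `-Δφ = φ^p` with `p = (n+2)/(n-2)`, the quadratic form of the linearized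
operator `-Δ - pφ^{p-1}` is negative at the explicit test function `ζ ∈ H¹`. -/
theorem critical_negative_energy
    (n : ℕ) (hn : 2 < n)
    (p : ℝ) (hp : p = ((n : ℝ) + 2) / ((n : ℝ) - 2))
    (lam : ℝ) (hlam : 0 < lam) (y : EuclideanSpace ℝ (Fin n))
    (φ ζ : EuclideanSpace ℝ (Fin n) → ℝ)
    (hφdef : ∀ x, φ x =
      (lam * Real.sqrt ((n : ℝ) * ((n : ℝ) - 2)) / (lam ^ 2 + ‖x - y‖ ^ 2))
        ^ (((n : ℝ) - 2) / 2))
    (hζdef : ∀ x, ζ x = (lam ^ 2 + ‖x - y‖ ^ 2) ^ (-(n : ℝ) / 2 - 1)) :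
    MemLp ζ 2 (volume : Measure (EuclideanSpace ℝ (Fin n))) ∧
    MemLp (gradient ζ) 2 (volume : Measure (EuclideanSpace ℝ (Fin n))) ∧
    (∫ x, ‖gradient ζ x‖ ^ 2 ∂(volume : Measure (EuclideanSpace ℝ (Fin n))))
      - (∫ x, p * φ x ^ (p - 1) * ζ x ^ 2
          ∂(volume : Measure (EuclideanSpace ℝ (Fin n)))) < 0 := by
  haveI : Nonempty (Fin n) := ⟨⟨0, by omega⟩⟩
  have hn3 : (2:ℝ) < (n:ℝ) := by exact_mod_cast hn
  have hb : ∀ x : EuclideanSpace ℝ (Fin n), 0 < lam ^ 2 + ‖x - y‖ ^ 2 := fun x => by positivity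
  have hζfun : ζ = fun x => (lam ^ 2 + ‖x - y‖ ^ 2) ^ (-(n:ℝ)/2 - 1) := funext hζdef
  -- gradient formula
  have hgrad : ∀ x, gradient ζ x
      = ((-(n:ℝ) - 2) * (lam ^ 2 + ‖x - y‖ ^ 2) ^ (-(n:ℝ)/2 - 2)) • (x - y) := by
    intro x
    rw [hζfun]
    exact (zeta_hasGradient hlam y x).gradient
  have hgradnorm : ∀ x, ‖gradient ζ x‖ ^ 2
      = ((n:ℝ)+2)^2 * (‖x - y‖^2 * (lam ^ 2 + ‖x - y‖ ^ 2) ^ (-((n:ℝ)+4))) := by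
    intro x
    rw [hgrad x, norm_smul, mul_pow, Real.norm_eq_abs, sq_abs, mul_pow]
    have h1 : ((lam ^ 2 + ‖x - y‖ ^ 2) ^ (-(n:ℝ)/2 - 2)) ^ 2
        = (lam ^ 2 + ‖x - y‖ ^ 2) ^ (-((n:ℝ)+4)) := by
      rw [← Real.rpow_natCast ((lam ^ 2 + ‖x - y‖ ^ 2) ^ (-(n:ℝ)/2 - 2)) 2,
        ← Real.rpow_mul (hb x).le]
      congr 1; push_cast; ring
    rw [h1]
    have h2 : (-(n:ℝ) - 2)^2 = ((n:ℝ)+2)^2 := by ring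
    rw [h2]; ring
  -- square of ζ
  have hζ2 : ∀ x, ζ x ^ 2 = (lam ^ 2 + ‖x - y‖ ^ 2) ^ (-((n:ℝ)+2)) := by
    intro x
    rw [hζdef x, ← Real.rpow_natCast ((lam ^ 2 + ‖x - y‖ ^ 2) ^ (-(n:ℝ)/2 - 1)) 2,
      ← Real.rpow_mul (hb x).le]
    congr 1; push_cast; ring
  have hne : (n:ℝ) - 2 ≠ 0 := by linarith
  -- potential term
  have hpot : ∀ x, p * φ x ^ (p - 1) * ζ x ^ 2
      = (n:ℝ)*((n:ℝ)+2)*lam^2 * (lam ^ 2 + ‖x - y‖ ^ 2) ^ (-((n:ℝ)+4)) := by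
    intro x
    have hw := hb x
    have hA0 : (0:ℝ) < (n:ℝ) * ((n:ℝ) - 2) := by nlinarith
    have hbpos : 0 < lam * Real.sqrt ((n:ℝ) * ((n:ℝ) - 2)) / (lam ^ 2 + ‖x - y‖ ^ 2) :=
      div_pos (mul_pos hlam (Real.sqrt_pos.2 hA0)) hw
    have hφp : φ x ^ (p - 1)
        = (lam * Real.sqrt ((n:ℝ) * ((n:ℝ) - 2)) / (lam ^ 2 + ‖x - y‖ ^ 2)) ^ (2:ℕ) := by
      rw [hφdef x, ← Real.rpow_mul hbpos.le,
        ← Real.rpow_natCast (lam * Real.sqrt ((n:ℝ) * ((n:ℝ) - 2)) / (lam ^ 2 + ‖x - y‖ ^ 2)) 2]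
      congr 1
      rw [hp]
      push_cast
      field_simp
      ring
    have hw2 : (lam ^ 2 + ‖x - y‖ ^ 2) ^ (-((n:ℝ)+2))
        = (lam ^ 2 + ‖x - y‖ ^ 2) ^ (2:ℕ) * (lam ^ 2 + ‖x - y‖ ^ 2) ^ (-((n:ℝ)+4)) := by
      rw [← Real.rpow_natCast (lam ^ 2 + ‖x - y‖ ^ 2) 2, ← Real.rpow_add hw]
      congr 1; push_cast; ring
    rw [hφp, hζ2 x, hw2, div_pow, mul_pow, Real.sq_sqrt hA0.le, hp]
    field_simp
  -- Memℒp ζ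
  have hζcont : Continuous ζ := by
    rw [hζfun]
    exact Continuous.rpow_const (by continuity) (fun x => Or.inl (hb x).ne')
  have memζ : MemLp ζ 2 (volume : Measure (EuclideanSpace ℝ (Fin n))) := by
    refine (memLp_two_iff_integrable_sq hζcont.aestronglyMeasurable).2 ?_
    have hi := (intE hlam (n := n) 0 ((n:ℝ)+2) (by push_cast; linarith)).comp_sub_right y
    refine hi.congr (Eventually.of_forall fun x => ?_)
    show ‖x - y‖ ^ 0 * (lam ^ 2 + ‖x - y‖ ^ 2) ^ (-((n:ℝ)+2)) = ζ x ^ 2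
    rw [hζ2 x, pow_zero, one_mul]
  -- Memℒp gradient
  have hgcont : Continuous (gradient ζ) := by
    rw [show gradient ζ = fun x =>
        (((-(n:ℝ) - 2) * (lam ^ 2 + ‖x - y‖ ^ 2) ^ (-(n:ℝ)/2 - 2)) • (x - y)) from
      funext hgrad]
    exact Continuous.smul
      (continuous_const.mul (Continuous.rpow_const (by continuity) (fun x => Or.inl (hb x).ne')))
      (continuous_id.sub continuous_const)
  have memgrad : MemLp (gradient ζ) 2 (volume : Measure (EuclideanSpace ℝ (Fin n))) := by
    refine (memLp_two_iff_integrable_sq_norm hgcont.aestronglyMeasurable).2 ?_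
    have hi := ((intE hlam (n := n) 2 ((n:ℝ)+4)
      (by push_cast; linarith)).comp_sub_right y).const_mul (((n:ℝ)+2)^2)
    refine hi.congr (Eventually.of_forall fun x => ?_)
    show ((n:ℝ)+2)^2 * (‖x - y‖ ^ 2 * (lam ^ 2 + ‖x - y‖ ^ 2) ^ (-((n:ℝ)+4))) = ‖gradient ζ x‖ ^ 2
    rw [hgradnorm x]
  refine ⟨memζ, memgrad, ?_⟩
  -- radial reduction
  set C : ℝ := (n:ℝ) * (volume (Metric.ball (0 : EuclideanSpace ℝ (Fin n)) 1)).toReal with hC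
  have hradial : ∀ g : ℝ → ℝ, (∫ x : EuclideanSpace ℝ (Fin n), g ‖x - y‖)
      = C * ∫ r in Ioi (0:ℝ), r ^ (n-1) * g r := by
    intro g
    have h1 : (∫ x : EuclideanSpace ℝ (Fin n), g ‖x - y‖)
        = ∫ x : EuclideanSpace ℝ (Fin n), g ‖x‖ :=
      integral_sub_right_eq_self (fun z : EuclideanSpace ℝ (Fin n) => g ‖z‖) y
    rw [h1, integral_fun_norm_addHaar volume g, finrank_euclideanSpace_fin]
    simp only [nsmul_eq_mul, smul_eq_mul, measureReal_def]
    rw [hC]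
    ring
  set A : ℝ := ∫ r in Ioi (0:ℝ), r ^ (n+1) * (lam ^ 2 + r ^ 2) ^ (-((n:ℝ)+4)) with hA
  set J : ℝ := ∫ r in Ioi (0:ℝ), r ^ (n-1) * (lam ^ 2 + r ^ 2) ^ (-((n:ℝ)+4)) with hJ
  set J3 : ℝ := ∫ r in Ioi (0:ℝ), r ^ (n-1) * (lam ^ 2 + r ^ 2) ^ (-((n:ℝ)+3)) with hJ3
  have hJ3int := int1d hlam (n-1) ((n:ℝ)+3)
    (by rw [Nat.cast_sub (by omega : 1 ≤ n)]; push_cast; linarith)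
  have hJint := int1d hlam (n-1) ((n:ℝ)+4)
    (by rw [Nat.cast_sub (by omega : 1 ≤ n)]; push_cast; linarith)
  have hAint := int1d hlam (n+1) ((n:ℝ)+4) (by push_cast; linarith)
  -- first integral
  have hI1 : (∫ x, ‖gradient ζ x‖ ^ 2 ∂(volume : Measure (EuclideanSpace ℝ (Fin n))))
      = C * (((n:ℝ)+2)^2 * A) := by
    calc (∫ x, ‖gradient ζ x‖ ^ 2 ∂(volume : Measure (EuclideanSpace ℝ (Fin n))))
        = ∫ x : EuclideanSpace ℝ (Fin n),
            (fun r : ℝ => ((n:ℝ)+2)^2 * (r^2 * (lam ^ 2 + r ^ 2) ^ (-((n:ℝ)+4)))) ‖x - y‖ :=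
          integral_congr_ae (Eventually.of_forall fun x => hgradnorm x)
      _ = C * ∫ r in Ioi (0:ℝ),
            r ^ (n-1) * (((n:ℝ)+2)^2 * (r^2 * (lam ^ 2 + r ^ 2) ^ (-((n:ℝ)+4)))) :=
          hradial (fun r : ℝ => ((n:ℝ)+2)^2 * (r^2 * (lam ^ 2 + r ^ 2) ^ (-((n:ℝ)+4))))
      _ = C * (((n:ℝ)+2)^2 * A) := by
          congr 1
          rw [hA, ← MeasureTheory.integral_const_mul]
          refine setIntegral_congr_fun measurableSet_Ioi (fun r _ => ?_)
          have : r ^ (n-1) * r ^ 2 = r ^ (n+1) := by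
            rw [← pow_add]; congr 1; omega
          calc r ^ (n-1) * (((n:ℝ)+2)^2 * (r^2 * (lam ^ 2 + r ^ 2) ^ (-((n:ℝ)+4))))
              = ((n:ℝ)+2)^2 * (r ^ (n-1) * r ^ 2 * (lam ^ 2 + r ^ 2) ^ (-((n:ℝ)+4))) := by ring
            _ = ((n:ℝ)+2)^2 * (r ^ (n+1) * (lam ^ 2 + r ^ 2) ^ (-((n:ℝ)+4))) := by rw [this]
  -- second integral
  have hI2 : (∫ x, p * φ x ^ (p - 1) * ζ x ^ 2
      ∂(volume : Measure (EuclideanSpace ℝ (Fin n))))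
      = C * ((n:ℝ)*((n:ℝ)+2)*lam^2 * J) := by
    calc (∫ x, p * φ x ^ (p - 1) * ζ x ^ 2 ∂(volume : Measure (EuclideanSpace ℝ (Fin n))))
        = ∫ x : EuclideanSpace ℝ (Fin n),
            (fun r : ℝ => (n:ℝ)*((n:ℝ)+2)*lam^2 * (lam ^ 2 + r ^ 2) ^ (-((n:ℝ)+4))) ‖x - y‖ :=
          integral_congr_ae (Eventually.of_forall fun x => hpot x)
      _ = C * ∫ r in Ioi (0:ℝ),
            r ^ (n-1) * ((n:ℝ)*((n:ℝ)+2)*lam^2 * (lam ^ 2 + r ^ 2) ^ (-((n:ℝ)+4))) :=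
          hradial (fun r : ℝ => (n:ℝ)*((n:ℝ)+2)*lam^2 * (lam ^ 2 + r ^ 2) ^ (-((n:ℝ)+4)))
      _ = C * ((n:ℝ)*((n:ℝ)+2)*lam^2 * J) := by
          congr 1
          rw [hJ, ← MeasureTheory.integral_const_mul]
          refine setIntegral_congr_fun measurableSet_Ioi (fun r _ => ?_)
          ring
  -- split identity : J3 = lam^2 * J + A
  have hsplit : J3 = lam^2 * J + A := by
    rw [hJ3, hJ, hA, ← MeasureTheory.integral_const_mul,
      ← integral_add (hJint.const_mul _) hAint]
    refine setIntegral_congr_fun measurableSet_Ioi (fun r _ => ?_)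
    have hbr := base_pos hlam r
    have e1 : (lam ^ 2 + r ^ 2) ^ (-((n:ℝ)+3))
        = (lam ^ 2 + r ^ 2) ^ (1:ℝ) * (lam ^ 2 + r ^ 2) ^ (-((n:ℝ)+4)) := by
      rw [← Real.rpow_add hbr]; congr 1; ring
    have e2 : r ^ (n-1) * r ^ 2 = r ^ (n+1) := by
      rw [← pow_add]; congr 1; omega
    rw [e1, Real.rpow_one]
    calc r ^ (n-1) * ((lam ^ 2 + r ^ 2) * (lam ^ 2 + r ^ 2) ^ (-((n:ℝ)+4)))
        = lam^2 * (r ^ (n-1) * (lam ^ 2 + r ^ 2) ^ (-((n:ℝ)+4)))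
          + r ^ (n-1) * r ^ 2 * (lam ^ 2 + r ^ 2) ^ (-((n:ℝ)+4)) := by ring
      _ = lam ^ 2 * (r ^ (n-1) * (lam ^ 2 + r ^ 2) ^ (-((n:ℝ)+4)))
          + r ^ (n+1) * (lam ^ 2 + r ^ 2) ^ (-((n:ℝ)+4)) := by rw [e2]
  have hkey := key_identity hlam n hn hJ3int hAint
  rw [← hJ3, ← hA, hsplit] at hkey
  have hrel : (n:ℝ) * (lam^2 * J) = ((n:ℝ)+6) * A := by linear_combination hkey
  have hJpos : 0 < J := by
    rw [hJ]
    exact int1d_pos hlam (n-1) ((n:ℝ)+4)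
      (by rw [Nat.cast_sub (by omega : 1 ≤ n)]; push_cast; linarith)
  have hP : 0 < lam^2 * J := mul_pos (by positivity) hJpos
  have hCpos : 0 < C := by
    rw [hC]
    refine mul_pos (by exact_mod_cast (by omega : 0 < n)) ?_
    exact ENNReal.toReal_pos (Metric.measure_ball_pos volume _ one_pos).ne' measure_ball_lt_top.ne
  have hX : ((n:ℝ)+2)^2 * A - (n:ℝ)*((n:ℝ)+2)*lam^2*J < 0 := by
    have h6 : ((n:ℝ)+6) * (((n:ℝ)+2)^2 * A - (n:ℝ)*((n:ℝ)+2)*lam^2*J)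
        = -4 * (n:ℝ) * ((n:ℝ)+2) * (lam^2 * J) := by
      linear_combination (-((n:ℝ)+2)^2) * hrel
    nlinarith [h6, hP, hn3, mul_pos (show (0:ℝ) < (n:ℝ)*((n:ℝ)+2) by nlinarith) hP]
  rw [hI1, hI2]
  have : C * (((n:ℝ)+2)^2 * A) - C * ((n:ℝ)*((n:ℝ)+2)*lam^2 * J)
      = C * (((n:ℝ)+2)^2 * A - (n:ℝ)*((n:ℝ)+2)*lam^2*J) := by ring
  rw [this]
  exact mul_neg_of_pos_of_neg hCpos hX
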